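/- Let D be a dense countably infinite mesh in I^n and fix an integer k with 1 ≤ k ≤ n. Let B, C : D → I be functions with C ≤ B, L_k^{(C,B)}(DU) ≥ 0 for all DU ∈ R_k(D), and γ_{k,D}^{(C,B)}(d) = 0 for all d ∈ D. Assume C(v) = B(v) for all vertices v of the unit cube I^n, and that there exists a k-box Q with vertices in D such that V_{C,k}(Q) = v < 0, with vertices x_1,…,x_s (s ∈ {1,…,2^{k−1}}) satisfying m_Q(x_i) = 1 and C(x_i) < B(x_i) for all i ∈ {1,…,s}, while C(x) = B(x) for every other vertex x of Q with m_Q(x) = 1. Assume further that for each i ∈ {1,…,s} we are given DU_i ∈ R_k(D) with m_{DU_i}(x_i) < 0 and L_k^{(C,B)}(DU_i) < |m_{DU_i}(x_i)|·|v|/s. Set m = ∏_{l=1}^s |m_{DU_l}(x_l)| and m_i = m/|m_{DU_i}(x_i)|, and define the multisets Ŕ (m copies of Q together with m_l copies of every box of DU_l for each l ∈ {1,…,s}) and, for each i ∈ {1,…,s}, Ŕ_i (m copies of Q together with m_l copies of every box of DU_l for each l ∈ {1,…,s}\{i}). Then: (i) for each i ∈ {1,…,s}, L_k^{(C,B)}(Ŕ_i)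 ≤ m·(B(x_i) − C(x_i)) + m·V_{C,k}(Q) + Σ_{l∈{1,…,s}\{i}} m_l·L_k^{(C,B)}(DU_l); (ii) L_k^{(C,B)}(Ŕ) ≤ m·V_{C,k}(Q) + Σ_{l=1}^s m_l·L_k^{(C,B)}(DU_l). -/

import Mathlib

open scoped Classical BigOperators

namespace KIncr

/-- Points of the ambient space `ℝ^n`. -/
abbrev Pt (n : ℕ) := Fin n → ℝ

/-- Membership in the unit cube `I^n = [0,1]^n`. -/
def inCube {n : ℕ} (x : Pt n) : Prop := ∀ i, x i ∈ Set.Icc (0:ℝ) 1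

/-- The unit cube as a set. -/
def cubeSet (n : ℕ) : Set (Pt n) := {x | inCube x}

/-- Vertices of the unit cube `I^n`. -/
def isCubeVertex {n : ℕ} (x : Pt n) : Prop := ∀ i, x i = 0 ∨ x i = 1

/-- A (formal) box, given by its lower-left and upper-right corners. -/
structure Box (n : ℕ) where
  lo : Pt n
  hi : Pt n

/-- `R` is a `k`-box in `I^n`: exactly `k` coordinates are nondegenerate. -/
def Box.IsKBox {n : ℕ} (k : ℕ) (R : Box n) : Prop :=
  inCube R.lo ∧ inCube R.hi ∧ (∀ i, R.lo i ≤ R.hi i) ∧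
    (Finset.univ.filter (fun i => R.lo i < R.hi i)).card = k

/-- `v` is a vertex of the box `R`. -/
def Box.IsVertex {n : ℕ} (R : Box n) (v : Pt n) : Prop :=
  ∀ i, v i = R.lo i ∨ v i = R.hi i

/-- The (finite) set of vertices of a box. -/
noncomputable def Box.vertices {n : ℕ} (R : Box n) : Finset (Pt n) :=
  Finset.image (fun ε : Fin n → Bool => fun i => if ε i then R.hi i else R.lo i)
    Finset.univ

/-- The sign `(-1)^(m-(n-k))` of a vertex `v` of a `k`-box, where
`m = #{i : v i = lo i}`;  since `m ≥ n - k`, this equals `(-1)^(m+(n-k))`. -/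
noncomputable def Box.sign {n : ℕ} (k : ℕ) (R : Box n) (v : Pt n) : ℤ :=
  (-1) ^ ((Finset.univ.filter (fun i => v i = R.lo i)).card + (n - k))

/-- The multiplicity `m_R(u)` of a point `u` with respect to a `k`-box `R`. -/
noncomputable def Box.mult {n : ℕ} (k : ℕ) (R : Box n) (u : Pt n) : ℤ :=
  if R.IsVertex u then R.sign k u else 0

/-- `V_{A,k}(R) = ∑_{v ∈ ver R} sign_R(v) · A(v)`. -/
noncomputable def Vvol {n : ℕ} (k : ℕ) (A : Pt n → ℝ) (R : Box n) : ℝ :=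
  ∑ v ∈ R.vertices, (R.sign k v : ℝ) * A v

/-- A function is `k`-increasing on `D` if `V_{A,k}(R) ≥ 0` for every `k`-box
with all vertices in `D`. -/
def KIncreasingOn {n : ℕ} (k : ℕ) (D : Set (Pt n)) (A : Pt n → ℝ) : Prop :=
  ∀ R : Box n, R.IsKBox k → (∀ v ∈ R.vertices, v ∈ D) → 0 ≤ Vvol k A R

/-- The multiplicity `m_DU(u)` of a point with respect to a formal (multiset)
disjoint union of `k`-boxes. -/
noncomputable def multDU {n : ℕ} (k : ℕ) (DU : Multiset (Box n)) (u : Pt n) : ℤ :=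
  (DU.map (fun R => R.mult k u)).sum

/-- `DU ∈ R_k(D)`: every box of the multiset `DU` is a `k`-box with all its
vertices in `D`. -/
def memRk {n : ℕ} (k : ℕ) (D : Set (Pt n)) (DU : Multiset (Box n)) : Prop :=
  ∀ R ∈ DU, R.IsKBox k ∧ ∀ v ∈ R.vertices, v ∈ D

/-- `L_k^{(A,B)}(DU) = ∑_{m_DU(u)>0} m_DU(u)·B(u) + ∑_{m_DU(u)<0} m_DU(u)·A(u)`. -/
noncomputable def Lk {n : ℕ} (k : ℕ) (A B : Pt n → ℝ) (DU : Multiset (Box n)) : ℝ :=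
  ∑ u ∈ DU.toFinset.biUnion Box.vertices,
    (if 0 < multDU k DU u then (multDU k DU u : ℝ) * B u
     else if multDU k DU u < 0 then (multDU k DU u : ℝ) * A u else 0)

/-- `P⁻_{k,D}^{(A,B)}(x)`, with the Mathlib convention `sInf ∅ = 0`. -/
noncomputable def Pneg {n : ℕ} (k : ℕ) (D : Set (Pt n)) (A B : Pt n → ℝ) (x : Pt n) : ℝ :=
  sInf {r : ℝ | ∃ DU : Multiset (Box n), memRk k D DU ∧ multDU k DU x < 0 ∧
    r = Lk k A B DU / |(multDU k DU x : ℝ)|}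

/-- `P⁺_{k,D}^{(A,B)}(x)`, with the Mathlib convention `sInf ∅ = 0`. -/
noncomputable def Ppos {n : ℕ} (k : ℕ) (D : Set (Pt n)) (A B : Pt n → ℝ) (x : Pt n) : ℝ :=
  sInf {r : ℝ | ∃ DU : Multiset (Box n), memRk k D DU ∧ 0 < multDU k DU x ∧
    r = Lk k A B DU / |(multDU k DU x : ℝ)|}

/-- `γ_{k,D}^{(A,B)}(x) = min {P⁻_{k,D}^{(A,B)}(x), B(x) - A(x)}`. -/
noncomputable def gammaK {n : ℕ} (k : ℕ) (D : Set (Pt n)) (A B : Pt n → ℝ) (x : Pt n) : ℝ :=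
  min (Pneg k D A B x) (B x - A x)

/-- `δ_{k,D}^{(A,B)}(x) = min {P⁺_{k,D}^{(A,B)}(x), B(x) - A(x)}`. -/
noncomputable def deltaK {n : ℕ} (k : ℕ) (D : Set (Pt n)) (A B : Pt n → ℝ) (x : Pt n) : ℝ :=
  min (Ppos k D A B x) (B x - A x)

/-- A dense countably infinite mesh `D = ∏ δᵢ` in `I^n`. -/
def IsMesh {n : ℕ} (D : Set (Pt n)) : Prop :=
  ∃ δ : Fin n → Set ℝ,
    (∀ i, δ i ⊆ Set.Icc (0:ℝ) 1 ∧ (δ i).Countable ∧ (δ i).Infinite ∧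
      Set.Icc (0:ℝ) 1 ⊆ closure (δ i) ∧ (0:ℝ) ∈ δ i ∧ (1:ℝ) ∈ δ i) ∧
    D = {x : Pt n | ∀ i, x i ∈ δ i}

/-- `A` is grounded: it vanishes whenever some coordinate is `0`. -/
def Grounded {n : ℕ} (A : Pt n → ℝ) : Prop :=
  ∀ x : Pt n, inCube x → (∃ i, x i = 0) → A x = 0

/-- `A` is 1-increasing (increasing in each variable). -/
def OneIncreasing {n : ℕ} (A : Pt n → ℝ) : Prop :=
  ∀ x y : Pt n, inCube x → inCube y → (∀ i, x i ≤ y i) → A x ≤ A y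

/-- `A` has uniform marginals. -/
def UniformMarginals {n : ℕ} (A : Pt n → ℝ) : Prop :=
  ∀ i : Fin n, ∀ t ∈ Set.Icc (0:ℝ) 1, A (Function.update (fun _ => (1:ℝ)) i t) = t

/-- `A` is a standardized function. -/
def Standardized {n : ℕ} (A : Pt n → ℝ) : Prop :=
  Grounded A ∧ OneIncreasing A ∧ A (fun _ => (1:ℝ)) = 1

/-- `A` is a semicopula. -/
def Semicopula {n : ℕ} (A : Pt n → ℝ) : Prop :=
  Grounded A ∧ OneIncreasing A ∧ UniformMarginals A

/-- `A` maps the unit cube into `I = [0,1]`. -/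
def MapsToI {n : ℕ} (A : Pt n → ℝ) : Prop :=
  ∀ x : Pt n, inCube x → A x ∈ Set.Icc (0:ℝ) 1

/-- Condition S: all discontinuities of all sections of `A` lie in the
countable set `S`. -/
def CondS {n : ℕ} (A : Pt n → ℝ) (S : Set ℝ) : Prop :=
  ∀ u : Pt n, inCube u → ∀ i : Fin n, ∀ t ∈ Set.Icc (0:ℝ) 1, t ∉ S →
    ContinuousWithinAt (fun s => A (Function.update u i s)) (Set.Icc (0:ℝ) 1) t

/-- A quasi-copula: a semicopula that is 1-Lipschitz w.r.t. the ℓ¹-norm. -/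
def QuasiCopula {n : ℕ} (A : Pt n → ℝ) : Prop :=
  Semicopula A ∧ ∀ x y : Pt n, inCube x → inCube y → |A x - A y| ≤ ∑ i, |x i - y i|

end KIncr

open KIncr

section Aux

variable {n : ℕ}

lemma mem_vertices_iff_isVertex (R : Box n) (u : Pt n) :
    u ∈ R.vertices ↔ R.IsVertex u := by
  classical
  constructor
  · rintro hu
    simp only [Box.vertices, Finset.mem_image] at hu
    obtain ⟨ε, -, rfl⟩ := hu
    intro i
    by_cases h : ε i
    · right; simp [h]
    · left; simp [h]
  · intro h
    simp only [Box.vertices, Finset.mem_image]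
    refine ⟨fun i => decide (u i = R.hi i), Finset.mem_univ _, ?_⟩
    funext i
    by_cases hd : u i = R.hi i
    · simp [hd]
    · have h2 : u i = R.lo i := (h i).resolve_right hd
      simp only [h2]
      split <;> simp_all

lemma mult_eq_zero_of_not_mem {k : ℕ} (R : Box n) (u : Pt n)
    (h : u ∉ R.vertices) : R.mult k u = 0 := by
  rw [Box.mult, if_neg (fun hv => h ((mem_vertices_iff_isVertex R u).mpr hv))]

lemma mult_eq_one_or_neg_one {k : ℕ} (R : Box n) (u : Pt n)
    (h : u ∈ R.vertices) : R.mult k u = 1 ∨ R.mult k u = -1 := by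
  rw [Box.mult, if_pos ((mem_vertices_iff_isVertex R u).mp h), Box.sign]
  rcases Nat.even_or_odd
      ((Finset.univ.filter (fun i => u i = R.lo i)).card + (n - k)) with he | ho
  · left; exact he.neg_one_pow
  · right; exact ho.neg_one_pow

lemma exists_box_of_multDU_ne_zero {k : ℕ} {S : Multiset (Box n)} {u : Pt n}
    (h : multDU k S u ≠ 0) : ∃ R ∈ S, u ∈ R.vertices := by
  by_contra hc
  push_neg at hc
  apply h
  rw [multDU]
  apply Multiset.sum_eq_zero
  intro z hz
  obtain ⟨R, hR, rfl⟩ := Multiset.mem_map.mp hz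
  exact mult_eq_zero_of_not_mem R u (hc R hR)

lemma multDU_add (k : ℕ) (S T : Multiset (Box n)) (u : Pt n) :
    multDU k (S + T) u = multDU k S u + multDU k T u := by
  simp [multDU]

lemma multDU_nsmul (k : ℕ) (c : ℕ) (S : Multiset (Box n)) (u : Pt n) :
    multDU k (c • S) u = (c : ℤ) * multDU k S u := by
  induction c with
  | zero => simp [multDU]
  | succ m ih =>
      rw [succ_nsmul, multDU_add, ih]
      push_cast
      ring

lemma multDU_replicate (k M : ℕ) (R : Box n) (u : Pt n) :
    multDU k (Multiset.replicate M R) u = (M : ℤ) * R.mult k u := by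
  simp [multDU, Multiset.map_replicate, Multiset.sum_replicate, nsmul_eq_mul]

lemma multDU_finsum {ι : Type*} (k : ℕ) (s : Finset ι) (f : ι → Multiset (Box n))
    (u : Pt n) :
    multDU k (∑ l ∈ s, f l) u = ∑ l ∈ s, multDU k (f l) u := by
  classical
  induction s using Finset.induction with
  | empty => simp [multDU]
  | insert a s h ih => rw [Finset.sum_insert h, multDU_add, ih, Finset.sum_insert h]

/-- `φ(m) = max(m·B(u), m·A(u))`, the summand of `Lk` in closed form. -/
noncomputable def phi (A B : Pt n → ℝ) (u : Pt n) (m : ℤ) : ℝ :=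
  max ((m : ℝ) * B u) ((m : ℝ) * A u)

lemma phi_zero (A B : Pt n → ℝ) (u : Pt n) : phi A B u 0 = 0 := by simp [phi]

lemma phi_add_le (A B : Pt n → ℝ) (u : Pt n) (a b : ℤ) :
    phi A B u (a + b) ≤ phi A B u a + phi A B u b := by
  unfold phi
  push_cast
  rw [add_mul, add_mul]
  exact max_add_add_le_max_add_max

lemma phi_sum_le {ι : Type*} (A B : Pt n → ℝ) (u : Pt n) (s : Finset ι) (f : ι → ℤ) :
    phi A B u (∑ l ∈ s, f l) ≤ ∑ l ∈ s, phi A B u (f l) := by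
  classical
  induction s using Finset.induction with
  | empty => simp [phi_zero]
  | insert a s h ih =>
      rw [Finset.sum_insert h, Finset.sum_insert h]
      exact le_trans (phi_add_le _ _ _ _ _) (by linarith)

lemma phi_nsmul (A B : Pt n → ℝ) (u : Pt n) (c : ℕ) (m : ℤ) :
    phi A B u ((c : ℤ) * m) = (c : ℝ) * phi A B u m := by
  unfold phi
  rw [mul_max_of_nonneg _ _ (by positivity : (0:ℝ) ≤ (c : ℝ))]
  push_cast
  ring_nf

lemma phi_of_nonpos {A B : Pt n → ℝ} {u : Pt n} {m : ℤ} (h : m ≤ 0)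
    (hAB : A u ≤ B u) : phi A B u m = (m : ℝ) * A u := by
  unfold phi
  exact max_eq_right (mul_le_mul_of_nonpos_left hAB (by exact_mod_cast h))

lemma phi_of_nonneg {A B : Pt n → ℝ} {u : Pt n} {m : ℤ} (h : 0 ≤ m)
    (hAB : A u ≤ B u) : phi A B u m = (m : ℝ) * B u := by
  unfold phi
  exact max_eq_left (mul_le_mul_of_nonneg_left hAB (by exact_mod_cast h))

lemma Lk_eq_sum_phi (k : ℕ) (A B : Pt n → ℝ) (S : Multiset (Box n))
    (F : Finset (Pt n)) (hF : ∀ R ∈ S, R.vertices ⊆ F)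
    (hAB : ∀ R ∈ S, ∀ v ∈ R.vertices, A v ≤ B v) :
    Lk k A B S = ∑ u ∈ F, phi A B u (multDU k S u) := by
  classical
  have hsub : S.toFinset.biUnion Box.vertices ⊆ F := by
    intro u hu
    obtain ⟨R, hR, hu⟩ := Finset.mem_biUnion.mp hu
    exact hF R (Multiset.mem_toFinset.mp hR) hu
  have hzero : ∀ u : Pt n, multDU k S u ≠ 0 → A u ≤ B u := by
    intro u hu
    obtain ⟨R, hR, hv⟩ := exists_box_of_multDU_ne_zero hu
    exact hAB R hR u hv
  rw [Lk]
  calc (∑ u ∈ S.toFinset.biUnion Box.vertices,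
        if 0 < multDU k S u then (multDU k S u : ℝ) * B u
        else if multDU k S u < 0 then (multDU k S u : ℝ) * A u else 0)
      = ∑ u ∈ S.toFinset.biUnion Box.vertices, phi A B u (multDU k S u) := by
        apply Finset.sum_congr rfl
        intro u _
        rcases lt_trichotomy (multDU k S u) 0 with hlt | heq | hgt
        · rw [if_neg (by omega), if_pos hlt,
            phi_of_nonpos hlt.le (hzero u (by omega))]
        · simp [heq, phi_zero]
        · rw [if_pos hgt, phi_of_nonneg hgt.le (hzero u (by omega))]
    _ = ∑ u ∈ F, phi A B u (multDU k S u) := by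
        apply Finset.sum_subset hsub
        intro u _ hu
        have hm : multDU k S u = 0 := by
          by_contra hc
          obtain ⟨R, hR, hv⟩ := exists_box_of_multDU_ne_zero hc
          exact hu (Finset.mem_biUnion.mpr ⟨R, Multiset.mem_toFinset.mpr hR, hv⟩)
        simp [hm, phi_zero]

lemma Vvol_eq_sum (k : ℕ) (A : Pt n → ℝ) (Qb : Box n) (F : Finset (Pt n))
    (hF : Qb.vertices ⊆ F) :
    Vvol k A Qb = ∑ u ∈ F, (Qb.mult k u : ℝ) * A u := by
  rw [Vvol]
  calc ∑ v ∈ Qb.vertices, (Qb.sign k v : ℝ) * A v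
      = ∑ v ∈ Qb.vertices, (Qb.mult k v : ℝ) * A v := by
        apply Finset.sum_congr rfl
        intro v hv
        rw [Box.mult, if_pos ((mem_vertices_iff_isVertex Qb v).mp hv)]
    _ = ∑ u ∈ F, (Qb.mult k u : ℝ) * A u := by
        apply Finset.sum_subset hF
        intro u _ hu
        rw [mult_eq_zero_of_not_mem Qb u hu]
        simp

end Aux


/-- Proposition 4.4: upper bounds for `L_k^{(C,B)}` of the
combined disjoint unions `Ŕ` and `Ŕᵢ`. -/
theorem stmt8 (n k : ℕ) (hn : 1 ≤ n) (hk1 : 1 ≤ k) (hkn : k ≤ n)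
    (D : Set (Pt n)) (hD : IsMesh D) (B C : Pt n → ℝ)
    (hCI : ∀ u ∈ D, C u ∈ Set.Icc (0:ℝ) 1) (hBI : ∀ u ∈ D, B u ∈ Set.Icc (0:ℝ) 1)
    (hCB : ∀ u ∈ D, C u ≤ B u)
    (hL : ∀ DU : Multiset (Box n), memRk k D DU → 0 ≤ Lk k C B DU)
    (hgamma : ∀ d ∈ D, gammaK k D C B d = 0)
    (hvert : ∀ w : Pt n, isCubeVertex w → C w = B w)
    (Q : Box n) (hQ : Q.IsKBox k) (hQD : ∀ w ∈ Q.vertices, w ∈ D)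
    (v : ℝ) (hv : Vvol k C Q = v) (hvneg : v < 0)
    (s : ℕ) (hs1 : 1 ≤ s) (hs2 : s ≤ 2 ^ (k - 1))
    (x : Fin s → Pt n) (hxinj : Function.Injective x)
    (hxv : ∀ i, x i ∈ Q.vertices ∧ Q.mult k (x i) = 1 ∧ C (x i) < B (x i))
    (hother : ∀ u ∈ Q.vertices, Q.mult k u = 1 → (∀ i, x i ≠ u) → C u = B u)
    (DU : Fin s → Multiset (Box n))
    (hDU : ∀ i, memRk k D (DU i) ∧ multDU k (DU i) (x i) < 0 ∧
      Lk k C B (DU i) < |(multDU k (DU i) (x i) : ℝ)| * |v| / (s : ℝ))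
    (M : ℕ) (hM : M = ∏ l, (multDU k (DU l) (x l)).natAbs)
    (mi : Fin s → ℕ)
    (hmi : ∀ i, mi i = ∏ l ∈ Finset.univ.erase i, (multDU k (DU l) (x l)).natAbs)
    (Rhat : Multiset (Box n))
    (hRhat : Rhat = Multiset.replicate M Q + ∑ l, mi l • DU l)
    (Rhati : Fin s → Multiset (Box n))
    (hRhati : ∀ i, Rhati i =
      Multiset.replicate M Q + ∑ l ∈ Finset.univ.erase i, mi l • DU l) :
    (∀ i, Lk k C B (Rhati i) ≤
        (M : ℝ) * (B (x i) - C (x i)) + (M : ℝ) * Vvol k C Q +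
        ∑ l ∈ Finset.univ.erase i, (mi l : ℝ) * Lk k C B (DU l)) ∧
    Lk k C B Rhat ≤ (M : ℝ) * Vvol k C Q + ∑ l, (mi l : ℝ) * Lk k C B (DU l) := by
  classical
  set F : Finset (Pt n) :=
    Q.vertices ∪ Finset.univ.biUnion (fun l => (DU l).toFinset.biUnion Box.vertices)
    with hFdef
  have hQF : Q.vertices ⊆ F := Finset.subset_union_left
  have hDUF : ∀ l, ∀ R ∈ DU l, R.vertices ⊆ F := by
    intro l R hR u hu
    apply Finset.mem_union_right
    exact Finset.mem_biUnion.mpr ⟨l, Finset.mem_univ l,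
      Finset.mem_biUnion.mpr ⟨R, Multiset.mem_toFinset.mpr hR, hu⟩⟩
  have hFD : ∀ u ∈ F, u ∈ D := by
    intro u hu
    rcases Finset.mem_union.mp hu with hu | hu
    · exact hQD u hu
    · obtain ⟨l, -, hu⟩ := Finset.mem_biUnion.mp hu
      obtain ⟨R, hR, hu⟩ := Finset.mem_biUnion.mp hu
      exact ((hDU l).1 R (Multiset.mem_toFinset.mp hR)).2 u hu
  have hCBF : ∀ u ∈ F, C u ≤ B u := fun u hu => hCB u (hFD u hu)
  have hbl : ∀ l, multDU k (DU l) (x l) < 0 := fun l => (hDU l).2.1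
  have hMil : ∀ i, (mi i : ℤ) * multDU k (DU i) (x i) = -(M : ℤ) := by
    intro i
    have h1 : (multDU k (DU i) (x i)).natAbs * mi i = M := by
      rw [hM, hmi i]
      exact Finset.mul_prod_erase Finset.univ
        (fun l => (multDU k (DU l) (x l)).natAbs) (Finset.mem_univ i)
    have h1' : ((multDU k (DU i) (x i)).natAbs : ℤ) * (mi i : ℤ) = (M : ℤ) := by
      exact_mod_cast congrArg (Nat.cast : ℕ → ℤ) h1
    have h2 : multDU k (DU i) (x i) = -(((multDU k (DU i) (x i)).natAbs : ℤ)) := by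
      have := hbl i; omega
    rw [h2, ← h1']
    ring
  have hLkDU : ∀ l, Lk k C B (DU l) = ∑ u ∈ F, phi C B u (multDU k (DU l) u) :=
    fun l => Lk_eq_sum_phi k C B (DU l) F (hDUF l)
      (fun R hR w hw => hCBF w (hDUF l R hR hw))
  have hVQ : Vvol k C Q = ∑ u ∈ F, ((Q.mult k u : ℝ) * C u) := Vvol_eq_sum k C Q F hQF
  -- the key pointwise estimate
  have key : ∀ (T : Finset (Fin s)), ∀ u ∈ F,
      phi C B u ((M : ℤ) * Q.mult k u + ∑ l ∈ T, (mi l : ℤ) * multDU k (DU l) u)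
        ≤ (∑ j ∈ Tᶜ, if u = x j then (M : ℝ) * (B u - C u) else 0)
          + (M : ℝ) * (Q.mult k u : ℝ) * C u
          + ∑ l ∈ T, (mi l : ℝ) * phi C B u (multDU k (DU l) u) := by
    intro T u hu
    have hCBu : C u ≤ B u := hCBF u hu
    have hind : 0 ≤ ∑ j ∈ Tᶜ, if u = x j then (M : ℝ) * (B u - C u) else 0 := by
      apply Finset.sum_nonneg
      intro j _
      split
      · have h0 : (0:ℝ) ≤ B u - C u := by linarith
        positivity
      · exact le_refl 0
    have hgen : phi C B u ((M : ℤ) * Q.mult k u + ∑ l ∈ T, (mi l : ℤ) * multDU k (DU l) u)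
        ≤ phi C B u ((M : ℤ) * Q.mult k u)
          + ∑ l ∈ T, (mi l : ℝ) * phi C B u (multDU k (DU l) u) := by
      refine le_trans (phi_add_le _ _ _ _ _) ?_
      apply add_le_add (le_refl _)
      refine le_trans (phi_sum_le C B u T _) (le_of_eq ?_)
      exact Finset.sum_congr rfl (fun l _ => phi_nsmul C B u (mi l) _)
    by_cases hx : ∃ j, u = x j
    · obtain ⟨j, rfl⟩ := hx
      have ha : Q.mult k (x j) = 1 := (hxv j).2.1
      by_cases hjT : j ∈ T
      · -- cancellation at x j
        have harg : (M : ℤ) * Q.mult k (x j) + ∑ l ∈ T, (mi l : ℤ) * multDU k (DU l) (x j)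
            = ∑ l ∈ T.erase j, (mi l : ℤ) * multDU k (DU l) (x j) := by
          rw [← Finset.add_sum_erase T _ hjT, ha, ← add_assoc, hMil j]
          ring
        rw [harg]
        have hle : phi C B (x j) (∑ l ∈ T.erase j, (mi l : ℤ) * multDU k (DU l) (x j))
            ≤ ∑ l ∈ T.erase j, (mi l : ℝ) * phi C B (x j) (multDU k (DU l) (x j)) := by
          refine le_trans (phi_sum_le C B (x j) _ _) (le_of_eq ?_)
          exact Finset.sum_congr rfl (fun l _ => phi_nsmul C B (x j) (mi l) _)
        refine le_trans hle ?_
        have hphij : (mi j : ℝ) * phi C B (x j) (multDU k (DU j) (x j))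
            = -((M : ℝ) * C (x j)) := by
          rw [phi_of_nonpos (hbl j).le hCBu]
          calc (mi j : ℝ) * ((multDU k (DU j) (x j) : ℝ) * C (x j))
              = (((mi j : ℤ) * multDU k (DU j) (x j) : ℤ) : ℝ) * C (x j) := by
                push_cast; ring
            _ = -((M : ℝ) * C (x j)) := by rw [hMil j]; push_cast; ring
        have hTsum : ∑ l ∈ T, (mi l : ℝ) * phi C B (x j) (multDU k (DU l) (x j))
            = (mi j : ℝ) * phi C B (x j) (multDU k (DU j) (x j))
              + ∑ l ∈ T.erase j, (mi l : ℝ) * phi C B (x j) (multDU k (DU l) (x j)) :=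
          (Finset.add_sum_erase T _ hjT).symm
        rw [hTsum, hphij, ha]
        push_cast
        linarith [hind]
      · -- j ∉ T : use the indicator term
        have hjc : j ∈ Tᶜ := Finset.mem_compl.mpr hjT
        have hindge : (M : ℝ) * (B (x j) - C (x j))
            ≤ ∑ j' ∈ Tᶜ, if x j = x j' then (M : ℝ) * (B (x j) - C (x j)) else 0 := by
          have hnn : ∀ i ∈ Tᶜ, (0:ℝ) ≤ if x j = x i then (M : ℝ) * (B (x j) - C (x j)) else 0 := by
            intro i _
            split
            · have h0 : (0:ℝ) ≤ B (x j) - C (x j) := by linarith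
              positivity
            · exact le_refl 0
          have := Finset.single_le_sum hnn hjc
          simpa using this
        have hMa : phi C B (x j) ((M : ℤ) * Q.mult k (x j)) = (M : ℝ) * B (x j) := by
          rw [ha, phi_of_nonneg (by positivity) hCBu]
          push_cast; ring
        refine le_trans hgen ?_
        rw [hMa, ha]
        push_cast
        linarith [hindge]
    · -- u is not one of the x j
      push_neg at hx
      have hMaC : phi C B u ((M : ℤ) * Q.mult k u) = (M : ℝ) * (Q.mult k u : ℝ) * C u := by
        rcases le_or_gt (Q.mult k u) 0 with h0 | h0
        · rw [phi_of_nonpos (mul_nonpos_of_nonneg_of_nonpos (by positivity) h0) hCBu]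
          push_cast; ring
        · have hvrt : u ∈ Q.vertices := by
            by_contra hc
            rw [mult_eq_zero_of_not_mem Q u hc] at h0
            exact lt_irrefl 0 h0
          have ha1 : Q.mult k u = 1 := by
            rcases mult_eq_one_or_neg_one Q u hvrt with h | h
            · exact h
            · omega
          have hCu : C u = B u := hother u hvrt ha1 (fun i he => hx i he.symm)
          rw [phi_of_nonneg (by rw [ha1]; positivity) hCBu, ha1, hCu]
          push_cast
          ring
      refine le_trans hgen ?_
      rw [hMaC]
      linarith [hind]
  -- decomposition of multiplicities
  have hmultRhat : ∀ u, multDU k Rhat u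
      = (M : ℤ) * Q.mult k u + ∑ l, (mi l : ℤ) * multDU k (DU l) u := by
    intro u
    rw [hRhat, multDU_add, multDU_replicate, multDU_finsum]
    exact congrArg _ (Finset.sum_congr rfl (fun l _ => multDU_nsmul k (mi l) (DU l) u))
  have hmultRhati : ∀ i u, multDU k (Rhati i) u
      = (M : ℤ) * Q.mult k u + ∑ l ∈ Finset.univ.erase i, (mi l : ℤ) * multDU k (DU l) u := by
    intro i u
    rw [hRhati i, multDU_add, multDU_replicate, multDU_finsum]
    exact congrArg _ (Finset.sum_congr rfl (fun l _ => multDU_nsmul k (mi l) (DU l) u))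
  -- Lk of the combined unions as F-sums
  have hboxF : ∀ (T : Finset (Fin s)) (R : Box n),
      R ∈ Multiset.replicate M Q + ∑ l ∈ T, mi l • DU l → R.vertices ⊆ F := by
    intro T R hR
    rcases Multiset.mem_add.mp hR with h | h
    · rw [(Multiset.mem_replicate.mp h).2]; exact hQF
    · obtain ⟨l, -, h⟩ := Multiset.mem_sum.mp h
      exact hDUF l R (Multiset.mem_nsmul.mp h).2
  have hLkRhat : Lk k C B Rhat = ∑ u ∈ F, phi C B u (multDU k Rhat u) := by
    rw [hRhat] at *
    exact Lk_eq_sum_phi k C B _ F (hboxF Finset.univ)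
      (fun R hR w hw => hCBF w (hboxF Finset.univ R hR hw))
  have hLkRhati : ∀ i, Lk k C B (Rhati i) = ∑ u ∈ F, phi C B u (multDU k (Rhati i) u) := by
    intro i
    rw [hRhati i] at *
    exact Lk_eq_sum_phi k C B _ F (hboxF (Finset.univ.erase i))
      (fun R hR w hw => hCBF w (hboxF (Finset.univ.erase i) R hR hw))
  -- sums of the right-hand summands
  have e1 : ∑ u ∈ F, ((M : ℝ) * (Q.mult k u : ℝ) * C u) = (M : ℝ) * Vvol k C Q := by
    rw [hVQ, Finset.mul_sum]
    exact Finset.sum_congr rfl (fun u _ => by ring)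
  have e2 : ∀ (T : Finset (Fin s)),
      ∑ u ∈ F, ∑ l ∈ T, (mi l : ℝ) * phi C B u (multDU k (DU l) u)
        = ∑ l ∈ T, (mi l : ℝ) * Lk k C B (DU l) := by
    intro T
    rw [Finset.sum_comm]
    exact Finset.sum_congr rfl (fun l _ => by rw [hLkDU l, Finset.mul_sum])
  constructor
  · -- part (i)
    intro i
    have hxiF : x i ∈ F := hQF (hxv i).1
    have hbound : Lk k C B (Rhati i)
        ≤ ∑ u ∈ F, ((∑ j ∈ (Finset.univ.erase i)ᶜ, if u = x j then (M : ℝ) * (B u - C u) else 0)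
            + (M : ℝ) * (Q.mult k u : ℝ) * C u
            + ∑ l ∈ Finset.univ.erase i, (mi l : ℝ) * phi C B u (multDU k (DU l) u)) := by
      rw [hLkRhati i]
      apply Finset.sum_le_sum
      intro u hu
      rw [hmultRhati i u]
      exact key (Finset.univ.erase i) u hu
    have hcompl : (Finset.univ.erase i)ᶜ = ({i} : Finset (Fin s)) := by
      rw [Finset.compl_erase]
      simp
    have hindsum : ∑ u ∈ F, (∑ j ∈ (Finset.univ.erase i)ᶜ,
        if u = x j then (M : ℝ) * (B u - C u) else 0)
        = (M : ℝ) * (B (x i) - C (x i)) := by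
      rw [hcompl]
      simp only [Finset.sum_singleton]
      rw [Finset.sum_ite_eq' F (x i) (fun u => (M : ℝ) * (B u - C u))]
      rw [if_pos hxiF]
    calc Lk k C B (Rhati i) ≤ _ := hbound
      _ = (M : ℝ) * (B (x i) - C (x i)) + (M : ℝ) * Vvol k C Q
          + ∑ l ∈ Finset.univ.erase i, (mi l : ℝ) * Lk k C B (DU l) := by
        rw [Finset.sum_add_distrib, Finset.sum_add_distrib, hindsum, e1,
          e2 (Finset.univ.erase i)]
  · -- part (ii)
    have hbound : Lk k C B Rhat
        ≤ ∑ u ∈ F, ((M : ℝ) * (Q.mult k u : ℝ) * C u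
            + ∑ l, (mi l : ℝ) * phi C B u (multDU k (DU l) u)) := by
      rw [hLkRhat]
      apply Finset.sum_le_sum
      intro u hu
      rw [hmultRhat u]
      have := key Finset.univ u hu
      simpa using this
    calc Lk k C B Rhat ≤ _ := hbound
      _ = (M : ℝ) * Vvol k C Q + ∑ l, (mi l : ℝ) * Lk k C B (DU l) := by
        rw [Finset.sum_add_distrib, e1, e2 Finset.univ]
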